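/- arXiv:1503.00521 — 2 statements merged into one kernel-verified Lean document; each statement's English description precedes it below -/
import Mathlib

section
/- Let a ∈ S, t ≥ 0, E ∈ F_t and s ≥ t. Then for every index i ∈ {1,…,M}, P_a(E ∩ {ω : ω(s) = i}) = Σ_{j=1}^{M} P_a(E ∩ {ω : ω(t) = j}) (e^{−(s−t)Λ})_{j i}; that is, the push-forward of the restricted measure P_a ↾ E under the evaluation ω ↦ ω(s) equals the push-forward under ω ↦ ω(t) multiplied on the right by the stochastic matrix e^{−(s−t)Λ}. -/
open MeasureTheory Matrix Filter Set Topology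

noncomputable section

/-- A path `f : ℝ → E` is cadlag (on `[0,∞)`): right-continuous at every `t ≥ 0`
and with left limits at every `t > 0`. -/
def IsCadlag {E : Type*} [TopologicalSpace E] (f : ℝ → E) : Prop :=
  (∀ t : ℝ, 0 ≤ t → ContinuousWithinAt f (Set.Ici t) t) ∧
  (∀ t : ℝ, 0 < t → ∃ l : E, Filter.Tendsto f (nhdsWithin t (Set.Ico 0 t)) (nhds l))

/-- The space `D` of cadlag paths with values in `{1,…,M}`. -/
def PathD (M : ℕ) : Type := {ω : ℝ → Fin M // IsCadlag ω}

/-- The σ-algebra `F_t`, generated by the cylinders with times `≤ t`. -/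
def Ft (M : ℕ) (t : ℝ) : MeasurableSpace (PathD M) :=
  MeasurableSpace.generateFrom
    {S | ∃ s : ℝ, 0 ≤ s ∧ s ≤ t ∧ ∃ j : Fin M, S = {ω : PathD M | ω.1 s = j}}

/-- The σ-algebra `F` on `D`, generated by the cylinders. -/
instance (M : ℕ) : MeasurableSpace (PathD M) :=
  MeasurableSpace.generateFrom
    {S | ∃ s : ℝ, 0 ≤ s ∧ ∃ j : Fin M, S = {ω : PathD M | ω.1 s = j}}

/-- The simplex `S` of probability vectors of `ℝ^M`. -/
def probSimplex (M : ℕ) : Set (Fin M → ℝ) := {a | (∀ i, 0 ≤ a i) ∧ ∑ i, a i = 1}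

/-- The matrix exponential `e^{-tΛ}`. -/
def mExp {M : ℕ} (Λ : Matrix (Fin M) (Fin M) ℝ) (t : ℝ) : Matrix (Fin M) (Fin M) ℝ :=
  NormedSpace.exp (-(t • Λ))

/-- The coupling matrix assumptions (H4), (H5): nonpositive off-diagonal entries,
rows summing to zero. -/
def CouplingOK {M : ℕ} (Λ : Matrix (Fin M) (Fin M) ℝ) : Prop :=
  (∀ i j, i ≠ j → Λ i j ≤ 0) ∧ (∀ i, ∑ j, Λ i j = 0)

/-- Irreducibility (H6). -/
def IrreducibleM {M : ℕ} (Λ : Matrix (Fin M) (Fin M) ℝ) : Prop :=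
  ∀ I : Finset (Fin M), I.Nonempty → I ≠ Finset.univ → ∃ i ∈ I, ∃ j ∉ I, Λ i j ≠ 0

/-- `μ` gives every cylinder `C(t₀,…,t_k; j₀,…,j_k)` the mass prescribed by the
matrix-exponential formula with initial distribution `a`. -/
def CylFormula {M : ℕ} (Λ : Matrix (Fin M) (Fin M) ℝ) (a : Fin M → ℝ)
    (μ : Measure (PathD M)) : Prop :=
  ∀ (k : ℕ) (t : Fin (k + 1) → ℝ) (j : Fin (k + 1) → Fin M), 0 ≤ t 0 → StrictMono t →
    (μ {ω : PathD M | ∀ l, ω.1 (t l) = j l}).toReal =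
      (a ᵥ* mExp Λ (t 0)) (j 0) *
        ∏ l : Fin k, mExp Λ (t l.succ - t l.castSucc) (j l.castSucc) (j l.succ)

/-- The family `a ↦ P_a` of probability measures induced by the coupling matrix. -/
def PFamily {M : ℕ} (Λ : Matrix (Fin M) (Fin M) ℝ)
    (P : (Fin M → ℝ) → Measure (PathD M)) : Prop :=
  ∀ a ∈ probSimplex M, IsProbabilityMeasure (P a) ∧ CylFormula Λ a (P a)

/-- The flat torus `𝕋^N`. -/
abbrev Torus (N : ℕ) := Fin N → AddCircle (1 : ℝ)

/-- Projection of `ℝ^N` onto the torus. -/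
def projT (N : ℕ) (x : Fin N → ℝ) : Torus N := fun i => (x i : AddCircle (1 : ℝ))

/-- `I(ξ)(t) = proj (∫_0^t ξ(s) ds)`. -/
def pathI (N : ℕ) (ξ : ℝ → Fin N → ℝ) (t : ℝ) : Torus N :=
  projT N (∫ s in (0:ℝ)..t, ξ s)

/-- Standing assumptions (H1)-(H3) on the Hamiltonians: continuity, convexity and
superlinearity in the momentum variable. -/
def HamHyp {M N : ℕ} (H : Fin M → Torus N → (Fin N → ℝ) → ℝ) : Prop :=
  ∀ i, (Continuous fun p : Torus N × (Fin N → ℝ) => H i p.1 p.2) ∧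
    (∀ x, ConvexOn ℝ Set.univ (H i x)) ∧
    (∀ x, ∀ c : ℝ, ∃ b : ℝ, ∀ p : Fin N → ℝ, c * ‖p‖ - b ≤ H i x p)

/-- The Lagrangians, obtained by Legendre-Fenchel duality. -/
def Lag {M N : ℕ} (H : Fin M → Torus N → (Fin N → ℝ) → ℝ) (i : Fin M) (x : Torus N)
    (q : Fin N → ℝ) : ℝ := ⨆ p : Fin N → ℝ, (p ⬝ᵥ q - H i x p)

/-- Subsolution of the weakly coupled system (HJα): a Lipschitz `u : 𝕋^N → ℝ^M` whose
(periodic lift) satisfies `H_i(x, Du_i) + Λ^i · u ≤ α` a.e. for each `i`. -/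
def IsSubsol {M N : ℕ} (H : Fin M → Torus N → (Fin N → ℝ) → ℝ)
    (Λ : Matrix (Fin M) (Fin M) ℝ) (α : ℝ) (u : Torus N → Fin M → ℝ) : Prop :=
  (∃ K : NNReal, ∀ i, LipschitzWith K fun x => u x i) ∧
  ∀ i : Fin M, ∀ᵐ x ∂(volume : Measure (Fin N → ℝ)),
    DifferentiableAt ℝ (fun y => u (projT N y) i) x ∧
    H i (projT N x) (fun j => fderiv ℝ (fun y => u (projT N y) i) x (Pi.single j 1)) +
      ∑ k, Λ i k * u (projT N x) k ≤ α

/-- The space `D(0,∞;ℝ^N)` of cadlag paths valued in `ℝ^N`. -/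
def PathR (N : ℕ) : Type := {ξ : ℝ → Fin N → ℝ // IsCadlag ξ}

/-- σ-algebra on `D(0,∞;ℝ^N)` generated by the evaluation maps. -/
instance (N : ℕ) : MeasurableSpace (PathR N) :=
  MeasurableSpace.generateFrom
    {S | ∃ t : ℝ, 0 ≤ t ∧ ∃ B : Set (Fin N → ℝ), MeasurableSet B ∧
      S = {ξ : PathR N | ξ.1 t ∈ B}}

/-- A property holds almost surely if it holds `P_a`-a.e. for every positive
probability vector `a`. -/
def ASurely {M : ℕ} (P : (Fin M → ℝ) → Measure (PathD M)) (Q : PathD M → Prop) : Prop :=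
  ∀ a ∈ probSimplex M, (∀ i, 0 < a i) → ∀ᵐ ω ∂(P a), Q ω

/-- An admissible control: measurable, locally (in time) bounded, nonanticipating. -/
def IsControl {M N : ℕ} (P : (Fin M → ℝ) → Measure (PathD M))
    (Ξ : PathD M → PathR N) : Prop :=
  Measurable Ξ ∧
  (∀ t : ℝ, 0 < t → ∃ R : ℝ, 0 < R ∧
    ASurely P fun ω => ∀ s ∈ Set.Icc (0:ℝ) t, ‖(Ξ ω).1 s‖ < R) ∧
  (∀ t : ℝ, 0 < t → ∀ ω₁ ω₂ : PathD M, (∀ s ∈ Set.Icc (0:ℝ) t, ω₁.1 s = ω₂.1 s) →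
    ∀ s ∈ Set.Icc (0:ℝ) t, (Ξ ω₁).1 s = (Ξ ω₂).1 s)

/-- A stopping time adapted to the filtration `F_t`. -/
def IsStopT {M : ℕ} (τ : PathD M → ℝ) : Prop :=
  (∀ ω, 0 ≤ τ ω) ∧ ∀ t : ℝ, 0 ≤ t → MeasurableSet[Ft M t] {ω | τ ω ≤ t}

/-- The class `K(τ, z)` of controls steering (a.s.) the random curve to `z` at time `τ`. -/
def Kset {M N : ℕ} (P : (Fin M → ℝ) → Measure (PathD M)) (τ : PathD M → ℝ)
    (z : Torus N) : Set (PathD M → PathR N) :=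
  {Ξ | IsControl P Ξ ∧ ASurely P fun ω => pathI N ((Ξ ω).1) (τ ω) = z}

/-- The value function given by the representation formula (5.1). -/
def valFun {M N : ℕ} (H : Fin M → Torus N → (Fin N → ℝ) → ℝ)
    (P : (Fin M → ℝ) → Measure (PathD M)) (α : ℝ) (y : Torus N) (b : Fin M → ℝ)
    (i : Fin M) (x : Torus N) : ℝ :=
  sInf {r : ℝ | ∃ τ : PathD M → ℝ, IsStopT τ ∧ (∃ T : ℝ, ∀ ω, τ ω ≤ T) ∧
    ∃ Ξ ∈ Kset P τ (y - x),
      r = ∫ ω, ((∫ s in (0:ℝ)..(τ ω),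
            (Lag H (ω.1 s) (x + pathI N ((Ξ ω).1) s) (-(Ξ ω).1 s) + α)) +
          b (ω.1 (τ ω))) ∂(P (Pi.single i 1))}

/-- Skorohod convergence in `D(0,∞;ℝ^N)`. -/
def SkTendsto {N : ℕ} (ξn : ℕ → ℝ → Fin N → ℝ) (ξ : ℝ → Fin N → ℝ) : Prop :=
  ∃ g : ℕ → ℝ → ℝ,
    (∀ n, ContinuousOn (g n) (Set.Ici 0) ∧ StrictMonoOn (g n) (Set.Ici 0) ∧
      g n '' Set.Ici 0 = Set.Ici 0) ∧
    TendstoUniformlyOn (fun n s => g n s) id Filter.atTop (Set.Ici 0) ∧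
    ∀ T : ℝ, 0 < T →
      TendstoUniformlyOn (fun n s => ξn n (g n s)) ξ Filter.atTop (Set.Icc 0 T)

/-- A control piecewise constant in `[0,t]`. -/
def PiecewiseConstControl {M N : ℕ} (Ξ : PathD M → PathR N) (t : ℝ) : Prop :=
  ∃ (m : ℕ) (s : Fin (m + 1) → ℝ), StrictMono s ∧ s 0 = 0 ∧ s (Fin.last m) = t ∧
    ∃ X : Fin m → PathD M → (Fin N → ℝ),
      (∀ k, Measurable[Ft M (s k.castSucc)] (X k) ∧ ∃ C : ℝ, ∀ ω, ‖X k ω‖ ≤ C) ∧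
      ∀ ω (k : Fin m), ∀ r ∈ Set.Ico (s k.castSucc) (s k.succ), (Ξ ω).1 r = X k ω

/-- Shifting a cadlag path by `h ≥ 0` yields a cadlag path. -/
theorem IsCadlag.shift {E : Type*} [TopologicalSpace E] {f : ℝ → E} (hf : IsCadlag f)
    {h : ℝ} (hh : 0 ≤ h) : IsCadlag fun s => f (s + h) := by
  constructor
  · intro t ht
    have h1 : ContinuousWithinAt f (Set.Ici (t + h)) (t + h) := hf.1 (t + h) (by linarith)
    have h2 : ContinuousWithinAt (fun s : ℝ => s + h) (Set.Ici t) t :=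
      (continuous_add_right h).continuousWithinAt
    have hm : Set.MapsTo (fun s : ℝ => s + h) (Set.Ici t) (Set.Ici (t + h)) := by
      intro s hs
      simp only [Set.mem_Ici] at hs ⊢
      linarith
    exact ContinuousWithinAt.comp (g := f) (f := fun s : ℝ => s + h)
      (t := Set.Ici (t + h)) h1 h2 hm
  · intro t ht
    obtain ⟨l, hl⟩ := hf.2 (t + h) (by linarith)
    refine ⟨l, hl.comp ?_⟩
    apply tendsto_nhdsWithin_of_tendsto_nhds_of_eventually_within
    · exact ((continuous_add_right h).tendsto t).mono_left nhdsWithin_le_nhds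
    · filter_upwards [self_mem_nhdsWithin] with s hs
      obtain ⟨hs0, hst⟩ := hs
      exact ⟨by linarith, by linarith⟩

/-- The shift flow `φ_h` on `D`. -/
def shiftD {M : ℕ} (h : ℝ) (hh : 0 ≤ h) (ω : PathD M) : PathD M :=
  ⟨fun s => ω.1 (s + h), ω.2.shift hh⟩


/-- A (right) stochastic matrix: nonnegative entries, each row summing to 1. -/
def IsStochasticM {M : ℕ} (B : Matrix (Fin M) (Fin M) ℝ) : Prop :=
  (∀ i j, 0 ≤ B i j) ∧ ∀ i, ∑ j, B i j = 1

end


section Aux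

open MeasureTheory Matrix Set

variable {M : ℕ}

theorem mExp_zero (Λ : Matrix (Fin M) (Fin M) ℝ) : mExp Λ 0 = 1 := by
  simp [mExp, NormedSpace.exp_zero]

theorem mExp_add (Λ : Matrix (Fin M) (Fin M) ℝ) (u v : ℝ) :
    mExp Λ u * mExp Λ v = mExp Λ (u + v) := by
  unfold mExp
  rw [← Matrix.exp_add_of_commute]
  · congr 1; rw [add_smul]; abel
  · unfold Commute SemiconjBy
    rw [neg_mul_neg, neg_mul_neg, smul_mul_smul_comm, smul_mul_smul_comm, mul_comm u v]

theorem strictMono_snoc {n : ℕ} {u : Fin (n+1) → ℝ} (hu : StrictMono u) {v : ℝ}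
    (hv : u (Fin.last n) < v) : StrictMono (Fin.snoc u v : Fin (n+2) → ℝ) := by
  intro a b hab
  induction b using Fin.lastCases with
  | last =>
    induction a using Fin.lastCases with
    | last => exact absurd rfl hab.ne
    | cast a =>
      rw [Fin.snoc_last, Fin.snoc_castSucc]
      exact lt_of_le_of_lt (hu.monotone (Fin.le_last a)) hv
  | cast b =>
    induction a using Fin.lastCases with
    | last => exact absurd hab (by
        simp [Fin.lt_def, Fin.last, Fin.is_lt, not_lt, Nat.lt_succ_iff,
          (b.castSucc.is_lt).le, Fin.le_def])
    | cast a =>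
      rw [Fin.snoc_castSucc, Fin.snoc_castSucc]
      exact hu (by exact_mod_cast hab)

theorem meas_cyl {u : ℝ} (hu : 0 ≤ u) (j : Fin M) :
    MeasurableSet {ω : PathD M | ω.1 u = j} :=
  MeasurableSpace.measurableSet_generateFrom ⟨u, hu, j, rfl⟩

theorem Ft_le (t : ℝ) (ht : 0 ≤ t) :
    Ft M t ≤ (inferInstance : MeasurableSpace (PathD M)) := by
  apply MeasurableSpace.generateFrom_le
  rintro S ⟨u, hu0, _, j, rfl⟩
  exact meas_cyl hu0 j

theorem single_cyl {Λ : Matrix (Fin M) (Fin M) ℝ} {a : Fin M → ℝ} {μ : Measure (PathD M)}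
    (hcyl : CylFormula Λ a μ) {u : ℝ} (hu : 0 ≤ u) (j : Fin M) :
    (μ {ω : PathD M | ω.1 u = j}).toReal = (a ᵥ* mExp Λ u) j := by
  haveI : Subsingleton (Fin (0+1)) := Fin.subsingleton_one
  have h := hcyl 0 (fun _ => u) (fun _ => j) hu
    (fun p q hpq => absurd (Subsingleton.elim p q) hpq.ne)
  simp only [Finset.univ_eq_empty, Finset.prod_empty, mul_one] at h
  have hset : {ω : PathD M | ∀ l : Fin 1, ω.1 u = j} = {ω : PathD M | ω.1 u = j} := by
    ext ω; simp
  rw [hset] at h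
  exact h

/-- Key lemma: evaluating at a time `v` beyond the last constraint time of a cylinder. -/
theorem cylinder_step {Λ : Matrix (Fin M) (Fin M) ℝ} {a : Fin M → ℝ} {μ : Measure (PathD M)}
    (hcyl : CylFormula Λ a μ) (T : Finset ℝ) (hne : T.Nonempty)
    (h0 : ∀ x ∈ T, 0 ≤ x) (c : ℝ → Fin M)
    {m : ℝ} (hmT : m ∈ T) (hmax : ∀ x ∈ T, x ≤ m)
    {v : ℝ} (hv : m ≤ v) (i : Fin M) :
    (μ ({ω : PathD M | ∀ x ∈ T, ω.1 x = c x} ∩ {ω : PathD M | ω.1 v = i})).toReal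
      = (μ {ω : PathD M | ∀ x ∈ T, ω.1 x = c x}).toReal * mExp Λ (v - m) (c m) i := by
  rcases eq_or_lt_of_le hv with hveq | hvlt
  · -- v = m : the new constraint is at the last time
    subst hveq
    by_cases hic : i = c m
    · subst hic
      have hset : {ω : PathD M | ∀ x ∈ T, ω.1 x = c x} ∩ {ω : PathD M | ω.1 m = c m}
          = {ω : PathD M | ∀ x ∈ T, ω.1 x = c x} := by
        apply inter_eq_left.2
        intro ω hω
        exact hω m hmT
      rw [hset, sub_self, mExp_zero, Matrix.one_apply_eq, mul_one]
    · have hset : {ω : PathD M | ∀ x ∈ T, ω.1 x = c x} ∩ {ω : PathD M | ω.1 m = i}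
          = (∅ : Set (PathD M)) := by
        apply eq_empty_of_forall_notMem
        rintro ω ⟨h1, h2⟩
        exact hic ((h2.symm.trans (h1 m hmT)))
      rw [hset, sub_self, mExp_zero, Matrix.one_apply_ne' hic]
      simp
  · -- m < v : append the time v
    obtain ⟨k, hk⟩ : ∃ k, T.card = k + 1 :=
      ⟨T.card - 1, (Nat.succ_pred_eq_of_pos (Finset.card_pos.2 hne)).symm⟩
    set e := T.orderIsoOfFin hk with he
    set u : Fin (k+1) → ℝ := fun l => (e l : ℝ) with hu
    have humono : StrictMono u := fun p q hpq => by
      exact_mod_cast (e.strictMono hpq)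
    have huT : ∀ l, u l ∈ T := fun l => (e l).2
    have hu0 : 0 ≤ u 0 := h0 _ (huT 0)
    have hulast : u (Fin.last k) = m := by
      apply le_antisymm (hmax _ (huT _))
      have : m = u (e.symm ⟨m, hmT⟩) := by simp [hu]
      rw [this]
      exact humono.monotone (Fin.le_last _)
    have hsetE : {ω : PathD M | ∀ x ∈ T, ω.1 x = c x}
        = {ω : PathD M | ∀ l, ω.1 (u l) = (c ∘ u) l} := by
      ext ω
      constructor
      · intro h l; exact h _ (huT l)
      · intro h x hx
        have : x = u (e.symm ⟨x, hx⟩) := by simp [hu]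
        rw [this]; exact h _
    -- formula for the base cylinder
    have hbase := hcyl k u (c ∘ u) hu0 humono
    -- extended times
    have hlastv : u (Fin.last k) < v := hulast ▸ hvlt
    have hmono' : StrictMono (Fin.snoc u v : Fin (k+2) → ℝ) := strictMono_snoc humono hlastv
    have hzero : (Fin.snoc u v : Fin (k+2) → ℝ) 0 = u 0 := by
      have : (0 : Fin (k+2)) = Fin.castSucc (0 : Fin (k+1)) := rfl
      rw [this, Fin.snoc_castSucc]
    have hzero' : (Fin.snoc (c ∘ u) i : Fin (k+2) → Fin M) 0 = (c ∘ u) 0 := by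
      have : (0 : Fin (k+2)) = Fin.castSucc (0 : Fin (k+1)) := rfl
      rw [this, Fin.snoc_castSucc]
    have hext := hcyl (k+1) (Fin.snoc u v) (Fin.snoc (c ∘ u) i)
      (by rw [hzero]; exact hu0) hmono'
    have hsetExt : {ω : PathD M | ∀ l : Fin (k+2),
          ω.1 ((Fin.snoc u v : Fin (k+2) → ℝ) l) = (Fin.snoc (c ∘ u) i : Fin (k+2) → Fin M) l}
        = {ω : PathD M | ∀ l, ω.1 (u l) = (c ∘ u) l} ∩ {ω : PathD M | ω.1 v = i} := by
      ext ω
      constructor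
      · intro h
        refine ⟨fun l => ?_, ?_⟩
        · have := h (Fin.castSucc l); simpa using this
        · have := h (Fin.last (k+1)); simpa using this
      · rintro ⟨h1, h2⟩ l
        induction l using Fin.lastCases with
        | last => simpa using h2
        | cast l => simpa using h1 l
    -- compute the product over Fin (k+1)
    have hprod : (∏ l : Fin (k+1),
          mExp Λ ((Fin.snoc u v : Fin (k+2) → ℝ) l.succ -
              (Fin.snoc u v : Fin (k+2) → ℝ) l.castSucc)
            ((Fin.snoc (c ∘ u) i : Fin (k+2) → Fin M) l.castSucc)
            ((Fin.snoc (c ∘ u) i : Fin (k+2) → Fin M) l.succ))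
        = (∏ l : Fin k,
            mExp Λ (u l.succ - u l.castSucc) ((c ∘ u) l.castSucc) ((c ∘ u) l.succ)) *
          mExp Λ (v - m) (c m) i := by
      rw [Fin.prod_univ_castSucc]
      congr 1
      · apply Finset.prod_congr rfl
        intro l _
        have h1 : (l.castSucc : Fin (k+1)).succ = Fin.castSucc l.succ := by
          rw [Fin.succ_castSucc]
        rw [h1, Fin.snoc_castSucc, Fin.snoc_castSucc, Fin.snoc_castSucc, Fin.snoc_castSucc]
      · have h2 : (Fin.last k).succ = Fin.last (k+1) := Fin.succ_last k
        rw [h2, Fin.snoc_last, Fin.snoc_last, Fin.snoc_castSucc, Fin.snoc_castSucc, hulast]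
        simp [hulast]
    rw [hsetE, ← hsetExt, hext, hzero, hzero', hprod, hbase]
    ring

/-- The "whole space" case of the Markov identity. -/
theorem univ_step {Λ : Matrix (Fin M) (Fin M) ℝ} {a : Fin M → ℝ} {μ : Measure (PathD M)}
    (hcyl : CylFormula Λ a μ) {t s : ℝ} (ht : 0 ≤ t) (hts : t ≤ s) (i : Fin M) :
    (μ {ω : PathD M | ω.1 s = i}).toReal
      = ∑ j : Fin M, (μ {ω : PathD M | ω.1 t = j}).toReal * mExp Λ (s - t) j i := by
  rw [single_cyl hcyl (ht.trans hts)]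
  have : ∀ j, (μ {ω : PathD M | ω.1 t = j}).toReal = (a ᵥ* mExp Λ t) j :=
    fun j => single_cyl hcyl ht j
  simp_rw [this]
  have : ∑ j : Fin M, (a ᵥ* mExp Λ t) j * mExp Λ (s - t) j i
      = ((a ᵥ* mExp Λ t) ᵥ* mExp Λ (s - t)) i := by
    simp [Matrix.vecMul, dotProduct]
  rw [this, Matrix.vecMul_vecMul, mExp_add]
  ring_nf

end Aux

/-- For `E ∈ F_t` and `s ≥ t`, the push-forward of `P_a ↾ E` under the
evaluation at time `s` is the push-forward under the evaluation at time `t` multiplied on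
the right by the stochastic matrix `e^{-(s-t)Λ}`. -/
theorem stmt2 {M : ℕ} (Λ : Matrix (Fin M) (Fin M) ℝ) (hΛ : CouplingOK Λ)
    (P : (Fin M → ℝ) → MeasureTheory.Measure (PathD M)) (hP : PFamily Λ P)
    (a : Fin M → ℝ) (ha : a ∈ probSimplex M) (t s : ℝ) (ht : 0 ≤ t) (hts : t ≤ s)
    (E : Set (PathD M)) (hE : MeasurableSet[Ft M t] E) :
    ∀ i : Fin M, (P a (E ∩ {ω : PathD M | ω.1 s = i})).toReal =
      ∑ j : Fin M, (P a (E ∩ {ω : PathD M | ω.1 t = j})).toReal * mExp Λ (s - t) j i := by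
  classical
  obtain ⟨hprob, hcyl⟩ := hP a ha
  have hs0 : 0 ≤ s := ht.trans hts
  set G : Set (Set (PathD M)) :=
    {S | ∃ u : ℝ, 0 ≤ u ∧ u ≤ t ∧ ∃ j : Fin M, S = {ω : PathD M | ω.1 u = j}} with hG
  have h_eq : Ft M t = MeasurableSpace.generateFrom (generatePiSystem G) :=
    generateFrom_generatePiSystem_eq.symm
  set C : Set (PathD M) → Prop := fun E => ∀ i : Fin M,
    (P a (E ∩ {ω : PathD M | ω.1 s = i})).toReal =
      ∑ j : Fin M, (P a (E ∩ {ω : PathD M | ω.1 t = j})).toReal * mExp Λ (s - t) j i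
    with hCdef
  -- normal form of π-system elements
  have hform : ∀ E ∈ generatePiSystem G, ∃ T : Finset ℝ, T.Nonempty ∧
      (∀ x ∈ T, 0 ≤ x ∧ x ≤ t) ∧ ∃ c : ℝ → Fin M,
      E = {ω : PathD M | ∀ x ∈ T, ω.1 x = c x} := by
    intro E hE
    induction hE with
    | base h =>
      obtain ⟨u, hu0, hut, j, rfl⟩ := h
      refine ⟨{u}, Finset.singleton_nonempty u, by simp [hu0, hut], fun _ => j, ?_⟩
      ext ω; simp
    | inter h1 h2 hnem ih1 ih2 =>
      obtain ⟨T₁, hne₁, hb₁, c₁, rfl⟩ := ih1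
      obtain ⟨T₂, hne₂, hb₂, c₂, rfl⟩ := ih2
      obtain ⟨ω₀, hω₁, hω₂⟩ := hnem
      have hagree : ∀ x, x ∈ T₁ → x ∈ T₂ → c₁ x = c₂ x := by
        intro x hx1 hx2
        rw [← hω₁ x hx1, ← hω₂ x hx2]
      refine ⟨T₁ ∪ T₂, Finset.Nonempty.inl hne₁,
        fun x hx => (Finset.mem_union.1 hx).elim (hb₁ x) (hb₂ x),
        fun x => if x ∈ T₁ then c₁ x else c₂ x, ?_⟩
      ext ω
      simp only [Set.mem_inter_iff, Set.mem_setOf_eq, Finset.mem_union]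
      constructor
      · rintro ⟨g1, g2⟩ x hx
        by_cases hxT : x ∈ T₁
        · simp [hxT, g1 x hxT]
        · simp only [hxT, if_false]
          exact g2 x (hx.resolve_left hxT)
      · intro g
        constructor
        · intro x hx
          have := g x (Or.inl hx)
          simpa [hx] using this
        · intro x hx
          have := g x (Or.inr hx)
          by_cases hxT : x ∈ T₁
          · rw [← hagree x hxT hx]
            simpa [hxT] using this
          · simpa [hxT] using this
  have main : ∀ ⦃E⦄, MeasurableSet[Ft M t] E → C E := by
    refine MeasurableSpace.induction_on_inter (m := Ft M t) (C := fun E _ => C E) h_eq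
      (isPiSystem_generatePiSystem G) ?_ ?_ ?_ ?_
    · -- empty
      intro i; simp
    · -- basic
      intro E hE i
      obtain ⟨T, hne, hb, c, rfl⟩ := hform E hE
      set m := T.max' hne with hm
      have hmT : m ∈ T := T.max'_mem hne
      have hmax : ∀ x ∈ T, x ≤ m := fun x hx => T.le_max' x hx
      have h0 : ∀ x ∈ T, 0 ≤ x := fun x hx => (hb x hx).1
      have hmt : m ≤ t := (hb m hmT).2
      have hstep_s := cylinder_step hcyl T hne h0 c hmT hmax (hmt.trans hts) i
      rw [hstep_s]
      have hstep_t : ∀ j, (P a ({ω : PathD M | ∀ x ∈ T, ω.1 x = c x} ∩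
          {ω : PathD M | ω.1 t = j})).toReal =
          (P a {ω : PathD M | ∀ x ∈ T, ω.1 x = c x}).toReal * mExp Λ (t - m) (c m) j :=
        fun j => cylinder_step hcyl T hne h0 c hmT hmax hmt j
      simp_rw [hstep_t, mul_assoc, ← Finset.mul_sum]
      congr 1
      have : ∑ j : Fin M, mExp Λ (t - m) (c m) j * mExp Λ (s - t) j i
          = (mExp Λ (t - m) * mExp Λ (s - t)) (c m) i := by
        rw [Matrix.mul_apply]
      rw [this, mExp_add]
      ring_nf
    · -- complement
      intro E hEm hCE i
      have hEm' : MeasurableSet E := Ft_le t ht _ hEm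
      have key : ∀ (v : ℝ), 0 ≤ v → ∀ j : Fin M,
          (P a (Eᶜ ∩ {ω : PathD M | ω.1 v = j})).toReal =
            (P a {ω : PathD M | ω.1 v = j}).toReal -
              (P a (E ∩ {ω : PathD M | ω.1 v = j})).toReal := by
        intro v hv j
        have hA : MeasurableSet {ω : PathD M | ω.1 v = j} := meas_cyl hv j
        have hset : Eᶜ ∩ {ω : PathD M | ω.1 v = j}
            = {ω : PathD M | ω.1 v = j} \ (E ∩ {ω : PathD M | ω.1 v = j}) := by
          ext ω; simp [Set.mem_diff]; tauto
        rw [hset, measure_diff Set.inter_subset_right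
          ((hEm'.inter hA).nullMeasurableSet) (measure_ne_top _ _),
          ENNReal.toReal_sub_of_le (measure_mono Set.inter_subset_right) (measure_ne_top _ _)]
      rw [key s hs0 i]
      simp_rw [key t ht]
      rw [hCE i, univ_step hcyl ht hts i, Finset.sum_congr rfl
        (fun j _ => sub_mul _ _ _), Finset.sum_sub_distrib]
    · -- countable disjoint union
      intro f hdisj hmeas hCf i
      have hmeas' : ∀ n, MeasurableSet (f n) := fun n => Ft_le t ht _ (hmeas n)
      have key : ∀ (v : ℝ), 0 ≤ v → ∀ j : Fin M,
          (P a ((⋃ n, f n) ∩ {ω : PathD M | ω.1 v = j})).toReal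
            = ∑' n, (P a (f n ∩ {ω : PathD M | ω.1 v = j})).toReal := by
        intro v hv j
        have hA : MeasurableSet {ω : PathD M | ω.1 v = j} := meas_cyl hv j
        rw [Set.iUnion_inter, measure_iUnion
          (fun p q hpq => ((hdisj hpq).mono Set.inter_subset_left Set.inter_subset_left))
          (fun n => (hmeas' n).inter hA),
          ENNReal.tsum_toReal_eq (fun n => measure_ne_top _ _)]
      have hsummable : ∀ j : Fin M,
          Summable (fun n => (P a (f n ∩ {ω : PathD M | ω.1 t = j})).toReal) := by
        intro j
        apply ENNReal.summable_toReal
        rw [← measure_iUnion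
          (fun p q hpq => ((hdisj hpq).mono Set.inter_subset_left Set.inter_subset_left))
          (fun n => (hmeas' n).inter (meas_cyl ht j)), ← Set.iUnion_inter]
        exact measure_ne_top _ _
      rw [key s hs0 i]
      simp_rw [key t ht]
      calc ∑' n, (P a (f n ∩ {ω : PathD M | ω.1 s = i})).toReal
          = ∑' n, ∑ j : Fin M,
              (P a (f n ∩ {ω : PathD M | ω.1 t = j})).toReal * mExp Λ (s - t) j i := by
            exact tsum_congr fun n => hCf n i
        _ = ∑ j : Fin M, ∑' n,
              (P a (f n ∩ {ω : PathD M | ω.1 t = j})).toReal * mExp Λ (s - t) j i := by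
            exact Summable.tsum_finsetSum (fun j _ => (hsummable j).mul_right _)
        _ = ∑ j : Fin M, (∑' n, (P a (f n ∩ {ω : PathD M | ω.1 t = j})).toReal) *
              mExp Λ (s - t) j i := by
            exact Finset.sum_congr rfl fun j _ => (tsum_mul_right)
  exact main hE
end

section
/- For any control Ξ and any t > 0, there exists a sequence of controls Ξ_n, each piecewise constant in [0,t], which is locally in time uniformly bounded (for every T > 0 there is R > 0 with sup_{[0,T]}|Ξ_n(ω)| < R for all n, a.s.) and such that Ξ_n(ω) converges to Ξ(ω) in the Skorohod sense for every ω ∈ D. -/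
open MeasureTheory Matrix Filter Set Topology

section Aux
open MeasureTheory Matrix Filter Set Topology
namespace S4


noncomputable def flo (h u : ℝ) : ℝ := h * ⌊u / h⌋
noncomputable def ce (h u : ℝ) : ℝ := h * ⌈u / h⌉
noncomputable def trunc {E : Type*} [NormedAddCommGroup E] (c : ℝ) (x : E) : E :=
  if ‖x‖ ≤ c then x else 0

variable {h u v t : ℝ}

lemma flo_le (hh : 0 < h) : flo h u ≤ u := by
  have := Int.floor_le (u / h)
  calc flo h u ≤ h * (u / h) := by exact mul_le_mul_of_nonneg_left this hh.le
    _ = u := by field_simp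

lemma lt_flo_add (hh : 0 < h) : u < flo h u + h := by
  have := Int.lt_floor_add_one (u / h)
  have h2 : h * (u / h) < h * (⌊u / h⌋ + 1) := by
    exact mul_lt_mul_of_pos_left this hh
  have h3 : h * (u / h) = u := by field_simp
  rw [h3] at h2; rw [flo]; linarith [h2]

lemma flo_nonneg (hh : 0 < h) (hu : 0 ≤ u) : 0 ≤ flo h u := by
  have : (0:ℤ) ≤ ⌊u / h⌋ := Int.floor_nonneg.2 (div_nonneg hu hh.le)
  have : (0:ℝ) ≤ (⌊u / h⌋ : ℝ) := by exact_mod_cast this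
  exact mul_nonneg hh.le this

lemma le_ce (hh : 0 < h) : u ≤ ce h u := by
  have := Int.le_ceil (u / h)
  calc u = h * (u / h) := by field_simp
    _ ≤ ce h u := mul_le_mul_of_nonneg_left this hh.le

lemma ce_lt (hh : 0 < h) : ce h u < u + h := by
  have := Int.ceil_lt_add_one (u / h)
  have h2 : h * ((⌈u / h⌉ : ℝ)) < h * (u / h + 1) := mul_lt_mul_of_pos_left this hh
  have h3 : h * (u / h + 1) = u + h := by field_simp
  rw [ce]; linarith

lemma flo_eq (hh : 0 < h) (k : ℤ) (h1 : h * k ≤ u) (h2 : u < h * k + h) :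
    flo h u = h * k := by
  have : ⌊u / h⌋ = k := by
    rw [Int.floor_eq_iff]
    constructor
    · rw [le_div_iff₀ hh]; linarith [h1]
    · rw [div_lt_iff₀ hh]; linarith [h2]
  rw [flo, this]

lemma grid_le_flo (hh : 0 < h) (k : ℤ) (h1 : h * k ≤ u) : h * k ≤ flo h u := by
  have : (k:ℝ) ≤ u / h := by rw [le_div_iff₀ hh]; linarith
  have : k ≤ ⌊u / h⌋ := Int.le_floor.2 this
  exact mul_le_mul_of_nonneg_left (by exact_mod_cast this) hh.le

lemma lt_of_flo_lt_ce (hh : 0 < h) (hlt : flo h u < ce h v) : flo h u < v := by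
  by_contra hc
  push_neg at hc
  have : (v / h) ≤ (⌊u / h⌋ : ℝ) := by
    rw [div_le_iff₀ hh]; rw [flo] at hc; linarith [hc]
  have h2 : ⌈v / h⌉ ≤ ⌊u / h⌋ := Int.ceil_le.2 this
  have : ce h v ≤ flo h u := by
    rw [ce, flo]
    exact mul_le_mul_of_nonneg_left (by exact_mod_cast h2) hh.le
  linarith

lemma ce_eq_self (hh : 0 < h) (k : ℤ) (hu : u = h * k) : ce h u = u := by
  rw [ce, hu]
  have : (h * (k:ℝ)) / h = (k:ℝ) := by field_simp
  rw [this, Int.ceil_intCast]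

lemma ce_zero (hh : 0 < h) : ce h 0 = 0 := by
  simpa using ce_eq_self hh 0 (by simp)

section trunc
variable {E : Type*} [NormedAddCommGroup E] {c : ℝ} {x : E}

lemma norm_trunc_le : ‖trunc c x‖ ≤ ‖x‖ := by
  rw [trunc]; split <;> simp [norm_nonneg]

lemma norm_trunc_le' (hc : 0 ≤ c) : ‖trunc c x‖ ≤ c := by
  rw [trunc]; split
  · assumption
  · simpa using hc

lemma trunc_eq_self (hxc : ‖x‖ ≤ c) : trunc c x = x := if_pos hxc

lemma measurable_trunc [MeasurableSpace E] [OpensMeasurableSpace E]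
    [SecondCountableTopology E] : Measurable (trunc c : E → E) := by
  unfold trunc
  exact Measurable.ite (measurableSet_le measurable_norm measurable_const)
    measurable_id measurable_const

end trunc


lemma nhdsWithin_event {α : Type*} [PseudoMetricSpace α] {p : α → Prop} {a : α} {s : Set α}
    (h : ∀ᶠ x in 𝓝[s] a, p x) : ∃ δ > 0, ∀ x ∈ s, dist x a < δ → p x := by
  obtain ⟨δ, hδ, hsub⟩ := Metric.mem_nhdsWithin_iff.mp h
  exact ⟨δ, hδ, fun x hx hd => hsub ⟨Metric.mem_ball.2 hd, hx⟩⟩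



lemma mono_of_lt_succ {f : ℕ → ℝ} {m : ℕ} (h : ∀ i < m, f i < f (i+1)) :
    ∀ i j, i ≤ j → j ≤ m → f i ≤ f j := by
  intro i j hij hjm
  induction j with
  | zero => simp_all
  | succ k ih =>
    rcases Nat.lt_or_ge i (k+1) with hk | hk
    · have h1 : f i ≤ f k := ih (Nat.lt_succ_iff.1 hk) (by omega)
      have h2 : f k < f (k+1) := h k (by omega)
      linarith
    · have : i = k + 1 := le_antisymm hij hk
      simp [this]

open Classical in
lemma locate {f : ℕ → ℝ} {m : ℕ} (h : ∀ i < m, f i < f (i+1)) (h0 : f 0 = 0)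
    {s : ℝ} (hs0 : 0 ≤ s) (hst : s < f m) :
    ∃ j < m, f j ≤ s ∧ s < f (j+1) := by
  set j := Nat.findGreatest (fun j => f j ≤ s) m with hj
  have h00 : (fun j => f j ≤ s) 0 := by simpa [h0] using hs0
  have hPj : f j ≤ s :=
    Nat.findGreatest_spec (P := fun j => f j ≤ s) (Nat.zero_le m) h00
  have hjm : j ≤ m := Nat.findGreatest_le m
  have hjltm : j < m := by
    rcases eq_or_lt_of_le hjm with he | hl
    · exfalso; rw [he] at hPj; linarith
    · exact hl
  refine ⟨j, hjltm, hPj, ?_⟩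
  by_contra hc
  push_neg at hc
  have := Nat.findGreatest_is_greatest (P := fun j => f j ≤ s) (k := j+1) (n := m)
    (by omega) (by omega)
  exact this hc


variable {E : Type*} [NormedAddCommGroup E] {ξ : ℝ → E} {t ε : ℝ}

/-- predicate: there is an ε-oscillation partition of `[0,u]`. -/
def OscP (ξ : ℝ → E) (ε u : ℝ) : Prop :=
  ∃ (m : ℕ) (τ : ℕ → ℝ), (∀ i < m, τ i < τ (i+1)) ∧ τ 0 = 0 ∧ τ m = u ∧
    ∀ i < m, ∀ v, τ i ≤ v → v < τ (i+1) → ‖ξ v - ξ (τ i)‖ ≤ ε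

lemma OscP.extend {u u' : ℝ} (hq : OscP ξ ε u) (huu : u < u')
    (hosc : ∀ v, u ≤ v → v < u' → ‖ξ v - ξ u‖ ≤ ε) : OscP ξ ε u' := by
  obtain ⟨m, τ, hτ, h0, hm, hoscτ⟩ := hq
  refine ⟨m + 1, fun i => if i ≤ m then τ i else u', ?_, ?_, ?_, ?_⟩
  · intro i hi
    rcases Nat.lt_or_ge i m with h' | h'
    · simp only [if_pos (by omega : i ≤ m), if_pos (by omega : i + 1 ≤ m)]
      exact hτ i h'
    · have : i = m := by omega
      subst this
      simp only [if_pos le_rfl, if_neg (by omega : ¬ i + 1 ≤ i)]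
      rw [hm]; exact huu
  · simp only [if_pos (Nat.zero_le m)]; exact h0
  · simp
  · intro i hi v hv1 hv2
    rcases Nat.lt_or_ge i m with h' | h'
    · simp only [if_pos (by omega : i ≤ m), if_pos (by omega : i + 1 ≤ m)] at hv1 hv2 ⊢
      exact hoscτ i h' v hv1 hv2
    · have : i = m := by omega
      subst this
      simp only [if_pos le_rfl, if_neg (by omega : ¬ i + 1 ≤ i)] at hv1 hv2 ⊢
      rw [hm] at hv1 ⊢
      exact hosc v hv1 hv2

lemma exists_osc_partition (hξ : IsCadlag ξ) (ht : 0 < t) (hε : 0 < ε) :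
    ∃ (m : ℕ) (τ : ℕ → ℝ), 0 < m ∧ (∀ i < m, τ i < τ (i+1)) ∧ τ 0 = 0 ∧ τ m = t ∧
      ∀ i < m, ∀ v, τ i ≤ v → v < τ (i+1) → ‖ξ v - ξ (τ i)‖ ≤ ε := by
  set A : Set ℝ := {u | 0 ≤ u ∧ u ≤ t ∧ OscP ξ ε u} with hA
  have hQ0 : OscP ξ ε 0 := ⟨0, fun _ => 0, by omega, rfl, rfl, by omega⟩
  have h0A : (0:ℝ) ∈ A := ⟨le_rfl, ht.le, hQ0⟩
  have hAne : A.Nonempty := ⟨0, h0A⟩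
  have hbdd : BddAbove A := ⟨t, fun x hx => hx.2.1⟩
  set c := sSup A with hc
  have hc_le : c ≤ t := csSup_le hAne (fun x hx => hx.2.1)
  have hc_ge : (0:ℝ) ≤ c := le_csSup hbdd h0A
  have hQc : OscP ξ ε c := by
    rcases eq_or_lt_of_le hc_ge with h' | hcpos
    · rw [← h']; exact hQ0
    · obtain ⟨l, hl⟩ := hξ.2 c hcpos
      have hev : ∀ᶠ v in 𝓝[Ico 0 c] c, ‖ξ v - l‖ ≤ ε / 2 := by
        have := hl (Metric.closedBall_mem_nhds l (half_pos hε))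
        filter_upwards [this] with v hv
        simpa [dist_eq_norm] using hv
      obtain ⟨δ, hδ, hδev⟩ := nhdsWithin_event hev
      obtain ⟨u₀, hu₀A, hu₀gt⟩ := exists_lt_of_lt_csSup hAne
        (show c - δ < c by linarith)
      have hu₀le : u₀ ≤ c := le_csSup hbdd hu₀A
      rcases eq_or_lt_of_le hu₀le with he | hlt
      · rw [← he]; exact hu₀A.2.2
      · refine hu₀A.2.2.extend hlt (fun v hv1 hv2 => ?_)
        have hv0 : v ∈ Ico 0 c := ⟨le_trans hu₀A.1 hv1, hv2⟩
        have hvd : dist v c < δ := by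
          rw [Real.dist_eq, abs_of_nonpos (by linarith)]; linarith
        have hu₀m : u₀ ∈ Ico 0 c := ⟨hu₀A.1, hlt⟩
        have hu₀d : dist u₀ c < δ := by
          rw [Real.dist_eq, abs_of_nonpos (by linarith)]; linarith
        have h1 := hδev v hv0 hvd
        have h2 := hδev u₀ hu₀m hu₀d
        calc ‖ξ v - ξ u₀‖ ≤ ‖ξ v - l‖ + ‖l - ξ u₀‖ := by
              have : ξ v - ξ u₀ = (ξ v - l) + (l - ξ u₀) := by abel
              rw [this]; exact norm_add_le _ _
          _ ≤ ε / 2 + ε / 2 := by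
              refine add_le_add h1 ?_
              rw [norm_sub_rev] at h2; exact h2
          _ = ε := by ring
  have hct : c = t := by
    by_contra hct
    have hclt : c < t := lt_of_le_of_ne hc_le hct
    have hr := hξ.1 c hc_ge
    have hev : ∀ᶠ v in 𝓝[Ici c] c, ‖ξ v - ξ c‖ ≤ ε := by
      have := hr (Metric.closedBall_mem_nhds (ξ c) hε)
      filter_upwards [this] with v hv
      simpa [dist_eq_norm] using hv
    obtain ⟨δ, hδ, hδev⟩ := nhdsWithin_event hev
    set c' := min (c + δ/2) t with hc'
    have hcc' : c < c' := lt_min (by linarith) hclt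
    have hc'A : c' ∈ A := by
      refine ⟨by linarith, min_le_right _ _, hQc.extend hcc' (fun v hv1 hv2 => ?_)⟩
      have hv2' : v < c + δ/2 := lt_of_lt_of_le hv2 (min_le_left _ _)
      exact hδev v hv1 (by rw [Real.dist_eq, abs_of_nonneg (by linarith)]; linarith)
    have := le_csSup hbdd hc'A
    rw [← hc] at this
    linarith
  obtain ⟨m, τ, hτ, h0, hm, hosc⟩ := hct ▸ hQc
  have hm0 : 0 < m := by
    rcases Nat.eq_zero_or_pos m with h' | h'
    · exfalso; rw [h', h0] at hm; linarith
    · exact h'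
  exact ⟨m, τ, hm0, hτ, h0, hm, hosc⟩

lemma exists_cadlag_bound (hξ : IsCadlag ξ) (ht : 0 < t) :
    ∃ C : ℝ, 0 ≤ C ∧ ∀ s, 0 ≤ s → s ≤ t → ‖ξ s‖ ≤ C := by
  obtain ⟨m, τ, hm0, hτ, h0, hm, hosc⟩ := exists_osc_partition hξ ht one_pos
  set C := (∑ i ∈ Finset.range (m+1), ‖ξ (τ i)‖) + 1 with hC
  have hsum_nonneg : 0 ≤ ∑ i ∈ Finset.range (m+1), ‖ξ (τ i)‖ :=
    Finset.sum_nonneg fun i _ => norm_nonneg _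
  refine ⟨C, by linarith, fun s hs0 hst => ?_⟩
  have hterm : ∀ i, i ∈ Finset.range (m+1) → ‖ξ (τ i)‖ ≤ ∑ j ∈ Finset.range (m+1), ‖ξ (τ j)‖ :=
    fun i hi => Finset.single_le_sum (f := fun j => ‖ξ (τ j)‖) (fun j _ => norm_nonneg _) hi
  rcases eq_or_lt_of_le hst with he | hlt
  · have := hterm m (Finset.mem_range.2 (by omega))
    rw [hm] at this
    rw [he]; linarith
  · obtain ⟨j, hjm, hj1, hj2⟩ := locate hτ h0 hs0 (by rw [hm]; exact hlt)
    have h1 := hosc j hjm s hj1 hj2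
    have h2 := hterm j (Finset.mem_range.2 (by omega))
    have : ‖ξ s‖ ≤ ‖ξ s - ξ (τ j)‖ + ‖ξ (τ j)‖ := by
      have := norm_add_le (ξ s - ξ (τ j)) (ξ (τ j)); simpa using this
    rw [hC]; linarith

/-- An increasing piecewise linear reparametrization of time. -/
noncomputable def pwl (m : ℕ) (τ γ : ℕ → ℝ) (t : ℝ) (s : ℝ) : ℝ :=
  min s 0 + max (s - t) 0 +
    ∑ i ∈ Finset.range m,
      ((γ (i+1) - γ i)/(τ (i+1) - τ i)) * max (min s (τ (i+1)) - τ i) 0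

variable {m : ℕ} {τ γ : ℕ → ℝ} {t s h : ℝ}

lemma pwl_continuous : Continuous (pwl m τ γ t) := by
  apply Continuous.add
  apply Continuous.add
  · exact continuous_id.min continuous_const
  · exact (continuous_id.sub continuous_const).max continuous_const
  · exact continuous_finset_sum _ fun i _ =>
      continuous_const.mul (((continuous_id.min continuous_const).sub continuous_const).max
        continuous_const)

section hyps
variable (hτ : ∀ i < m, τ i < τ (i+1)) (hτ0 : τ 0 = 0) (hτm : τ m = t)
include hτ hτ0 hτm

lemma pwl_formula {j : ℕ} (hj : j < m) (h1 : τ j ≤ s) (h2 : s ≤ τ (j+1)) :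
    pwl m τ γ t s = γ j - γ 0 + ((γ (j+1) - γ j)/(τ (j+1) - τ j)) * (s - τ j) := by
  have hmono := mono_of_lt_succ hτ
  have hs0 : 0 ≤ s := le_trans (by rw [← hτ0]; exact hmono 0 j (Nat.zero_le _) (by omega)) h1
  have hst : s ≤ t := le_trans h2 (by rw [← hτm]; exact hmono (j+1) m (by omega) le_rfl)
  rw [pwl, min_eq_right hs0, max_eq_right (by linarith)]
  rw [← Finset.sum_range_add_sum_Ico _ (show j+1 ≤ m by omega)]
  have hico : ∑ i ∈ Finset.Ico (j+1) m,
      ((γ (i+1) - γ i)/(τ (i+1) - τ i)) * max (min s (τ (i+1)) - τ i) 0 = 0 := by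
    apply Finset.sum_eq_zero
    intro i hi
    obtain ⟨hi1, hi2⟩ := Finset.mem_Ico.1 hi
    have hsτ : s ≤ τ i := le_trans h2 (hmono (j+1) i hi1 (by omega))
    have : min s (τ (i+1)) = s :=
      min_eq_left (le_trans hsτ (hmono i (i+1) (by omega) (by omega)))
    rw [this, max_eq_right (by linarith)]
    ring
  rw [hico, Finset.sum_range_succ]
  have hj1 : min s (τ (j+1)) = s := min_eq_left h2
  rw [hj1, max_eq_left (by linarith)]
  have hrange : ∑ i ∈ Finset.range j,
      ((γ (i+1) - γ i)/(τ (i+1) - τ i)) * max (min s (τ (i+1)) - τ i) 0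
      = ∑ i ∈ Finset.range j, (γ (i+1) - γ i) := by
    apply Finset.sum_congr rfl
    intro i hi
    have hij : i < j := Finset.mem_range.1 hi
    have h1' : τ (i+1) ≤ τ j := hmono (i+1) j (by omega) (by omega)
    have : min s (τ (i+1)) = τ (i+1) := min_eq_right (le_trans h1' h1)
    rw [this, max_eq_left (by linarith [hτ i (by omega : i < m)])]
    rw [div_mul_eq_mul_div, mul_div_assoc, div_self (by linarith [hτ i (by omega : i < m)] : τ (i+1) - τ i ≠ 0), mul_one]
  rw [hrange, Finset.sum_range_sub (fun i => γ i)]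
  ring

lemma pwl_of_nonpos (hs : s ≤ 0) : pwl m τ γ t s = s := by
  have hmono := mono_of_lt_succ hτ
  have ht0 : 0 ≤ t := by rw [← hτm, ← hτ0]; exact hmono 0 m (Nat.zero_le _) le_rfl
  have hτi : ∀ i, i ≤ m → 0 ≤ τ i := fun i hi => by
    rw [← hτ0]; exact hmono 0 i (Nat.zero_le _) hi
  rw [pwl, min_eq_left hs, max_eq_right (by linarith)]
  have : ∑ i ∈ Finset.range m,
      ((γ (i+1) - γ i)/(τ (i+1) - τ i)) * max (min s (τ (i+1)) - τ i) 0 = 0 := by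
    apply Finset.sum_eq_zero
    intro i hi
    have hi' : i < m := Finset.mem_range.1 hi
    have : min s (τ (i+1)) = s := min_eq_left (le_trans hs (hτi (i+1) (by omega)))
    rw [this, max_eq_right (by linarith [hτi i (by omega : i ≤ m)])]
    ring
  rw [this]; ring

lemma pwl_of_ge (hγ0 : γ 0 = 0) (hγm : γ m = t) (hs : t ≤ s) : pwl m τ γ t s = s := by
  have hmono := mono_of_lt_succ hτ
  have ht0 : 0 ≤ t := by rw [← hτm, ← hτ0]; exact hmono 0 m (Nat.zero_le _) le_rfl
  rw [pwl, min_eq_right (by linarith), max_eq_left (by linarith)]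
  have : ∑ i ∈ Finset.range m,
      ((γ (i+1) - γ i)/(τ (i+1) - τ i)) * max (min s (τ (i+1)) - τ i) 0
      = ∑ i ∈ Finset.range m, (γ (i+1) - γ i) := by
    apply Finset.sum_congr rfl
    intro i hi
    have hi' : i < m := Finset.mem_range.1 hi
    have hle : τ (i+1) ≤ s := le_trans (by rw [← hτm]; exact hmono (i+1) m (by omega) le_rfl) hs
    rw [min_eq_right hle, max_eq_left (by linarith [hτ i hi'])]
    rw [div_mul_eq_mul_div, mul_div_assoc, div_self (by linarith [hτ i hi'] : τ (i+1) - τ i ≠ 0), mul_one]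
  rw [this, Finset.sum_range_sub (fun i => γ i), hγm, hγ0]
  ring

end hyps
variable {m : ℕ} {τ γ : ℕ → ℝ} {t s h : ℝ}
section hyps2
variable (hτ : ∀ i < m, τ i < τ (i+1)) (hτ0 : τ 0 = 0) (hτm : τ m = t)
  (hγ : ∀ i < m, γ i < γ (i+1))
include hτ hτ0 hτm hγ

lemma pwl_mono : Monotone (pwl m τ γ t) := by
  intro x y hxy
  unfold pwl
  refine add_le_add (add_le_add (min_le_min hxy le_rfl)
    (max_le_max (sub_le_sub_right hxy t) le_rfl)) (Finset.sum_le_sum fun i hi => ?_)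
  have hi' : i < m := Finset.mem_range.1 hi
  have hc : 0 ≤ (γ (i+1) - γ i)/(τ (i+1) - τ i) :=
    div_nonneg (by linarith [hγ i hi']) (by linarith [hτ i hi'])
  exact mul_le_mul_of_nonneg_left
    (max_le_max (sub_le_sub_right (min_le_min hxy le_rfl) _) le_rfl) hc

lemma pwl_strictMonoOn (hγ0 : γ 0 = 0) (hγm : γ m = t) (ht : 0 < t) :
    StrictMonoOn (pwl m τ γ t) (Ici 0) := by
  intro x hx y hy hxy
  simp only [mem_Ici] at hx hy
  rcases le_or_gt t x with hxt | hxt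
  · rw [pwl_of_ge hτ hτ0 hτm hγ0 hγm hxt, pwl_of_ge hτ hτ0 hτm hγ0 hγm (by linarith)]
    exact hxy
  · obtain ⟨j, hjm, hj1, hj2⟩ := locate hτ hτ0 hx (by rw [hτm]; exact hxt)
    have hcj : 0 < (γ (j+1) - γ j)/(τ (j+1) - τ j) :=
      div_pos (by linarith [hγ j hjm]) (by linarith [hτ j hjm])
    rcases le_or_gt y (τ (j+1)) with hyj | hyj
    · rw [pwl_formula hτ hτ0 hτm hjm hj1 hj2.le,
        pwl_formula hτ hτ0 hτm hjm (by linarith) hyj]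
      have : (γ (j+1) - γ j)/(τ (j+1) - τ j) * (x - τ j)
          < (γ (j+1) - γ j)/(τ (j+1) - τ j) * (y - τ j) :=
        mul_lt_mul_of_pos_left (by linarith) hcj
      linarith
    · have h1 : pwl m τ γ t x < pwl m τ γ t (τ (j+1)) := by
        rw [pwl_formula hτ hτ0 hτm hjm hj1 hj2.le,
          pwl_formula hτ hτ0 hτm hjm (le_of_lt (hτ j hjm)) le_rfl]
        have : (γ (j+1) - γ j)/(τ (j+1) - τ j) * (x - τ j)
            < (γ (j+1) - γ j)/(τ (j+1) - τ j) * (τ (j+1) - τ j) :=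
          mul_lt_mul_of_pos_left (by linarith) hcj
        linarith
      exact lt_of_lt_of_le h1 (pwl_mono hτ hτ0 hτm hγ hyj.le)

lemma pwl_sub_bounds (hγ0 : γ 0 = 0) (hγm : γ m = t) (ht : 0 < t) (hh : 0 < h)
    (hd : ∀ i ≤ m, 0 ≤ γ i - τ i ∧ γ i - τ i < h) :
    0 ≤ pwl m τ γ t s - s ∧ pwl m τ γ t s - s < h := by
  rcases le_or_gt s 0 with hs | hs
  · rw [pwl_of_nonpos hτ hτ0 hτm hs]; constructor <;> linarith
  rcases le_or_gt t s with hst | hst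
  · rw [pwl_of_ge hτ hτ0 hτm hγ0 hγm hst]; constructor <;> linarith
  obtain ⟨j, hjm, hj1, hj2⟩ := locate hτ hτ0 hs.le (by rw [hτm]; exact hst)
  have hΔ : 0 < τ (j+1) - τ j := by linarith [hτ j hjm]
  set a := γ j - τ j with ha
  set b := γ (j+1) - τ (j+1) with hb
  obtain ⟨ha0, hah⟩ := hd j (by omega)
  obtain ⟨hb0, hbh⟩ := hd (j+1) (by omega)
  set θ := (s - τ j)/(τ (j+1) - τ j) with hθ
  have hθ0 : 0 ≤ θ := div_nonneg (by linarith) hΔ.le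
  have hθ1 : θ ≤ 1 := (div_le_one hΔ).2 (by linarith)
  have key : pwl m τ γ t s - s = a + (b - a) * θ := by
    rw [pwl_formula hτ hτ0 hτm hjm hj1 hj2.le, hγ0]
    rw [ha, hb, hθ]
    field_simp
    ring
  rw [key]
  have hw : (0:ℝ) ≤ 1 - θ := by linarith
  constructor
  · nlinarith [mul_nonneg ha0 hw, mul_nonneg hb0 hθ0]
  · rcases eq_or_lt_of_le hθ0 with h0 | h0
    · rw [← h0]; simpa using hah
    · have e1 : a*(1-θ) ≤ h*(1-θ) := mul_le_mul_of_nonneg_right hah.le hw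
      have e2 : b*θ < h*θ := mul_lt_mul_of_pos_right hbh h0
      nlinarith [e1, e2]
end hyps2


lemma isCadlag_disc {E : Type*} [NormedAddCommGroup E] {ξ : ℝ → E} (hξ : IsCadlag ξ)
    {t h c : ℝ} (hh : 0 < h) :
    IsCadlag (fun s => if s < t then trunc c (ξ (flo h s)) else ξ s) := by
  set f : ℝ → E := fun s => if s < t then trunc c (ξ (flo h s)) else ξ s with hf
  constructor
  · intro s hs
    by_cases hst : s < t
    · set b := min t (flo h s + h) with hb
      have hsb : s < b := lt_min hst (lt_flo_add hh)
      have hconst : ∀ u ∈ Ico s b, f u = f s := by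
        intro u hu
        have hut : u < t := lt_of_lt_of_le hu.2 (by rw [hb]; exact min_le_left _ _)
        have hflo : flo h u = flo h s := by
          have h1 : h * ⌊s / h⌋ ≤ u := le_trans (flo_le hh) hu.1
          have h2 : u < h * ⌊s / h⌋ + h :=
            lt_of_lt_of_le hu.2 (by rw [hb]; exact min_le_right _ _)
          exact flo_eq hh _ h1 h2
        simp only [hf, if_pos hut, if_pos hst, hflo]
      have hev : f =ᶠ[𝓝[Ici s] s] (fun _ => f s) := by
        filter_upwards [Ico_mem_nhdsGE_of_mem ⟨le_rfl, hsb⟩] with u hu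
        exact hconst u hu
      exact Tendsto.congr' hev.symm tendsto_const_nhds
    · push_neg at hst
      refine (hξ.1 s hs).congr (fun u hu => ?_) ?_
      · exact if_neg (not_lt.2 (le_trans hst hu))
      · exact if_neg (not_lt.2 hst)
  · intro s hs
    by_cases hst : s ≤ t
    · set K : ℤ := ⌈s / h⌉ - 1 with hK
      set p := h * (K:ℝ) with hp
      have hps : p < s := by
        have h1 : (⌈s / h⌉ : ℝ) < s / h + 1 := Int.ceil_lt_add_one _
        have h2 : h * ((⌈s / h⌉ : ℝ) - 1) < h * (s / h) := by
          apply mul_lt_mul_of_pos_left _ hh; linarith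
        have h3 : h * (s / h) = s := by field_simp
        rw [hp, hK]; push_cast; linarith
      set q := max p 0 with hq
      have hqs : q < s := max_lt hps hs
      have hconst : ∀ u, q < u → u < s → f u = trunc c (ξ p) := by
        intro u h1 h2
        have hut : u < t := lt_of_lt_of_le h2 hst
        have hpu : p ≤ u := le_trans (le_max_left _ _) h1.le
        have hup : u < p + h := by
          have : s ≤ h * (⌈s / h⌉ : ℝ) := le_ce hh
          rw [hp, hK]; push_cast; linarith
        have : flo h u = p := flo_eq hh K hpu (by rw [hp] at hup; exact hup)
        simp only [hf, if_pos hut, this]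
      refine ⟨trunc c (ξ p), ?_⟩
      have hev : f =ᶠ[𝓝[Ico 0 s] s] (fun _ => trunc c (ξ p)) := by
        have hgt : ∀ᶠ u in 𝓝[Ico 0 s] s, q < u :=
          (eventually_gt_nhds hqs).filter_mono nhdsWithin_le_nhds
        filter_upwards [hgt, self_mem_nhdsWithin] with u h1 h2
        exact hconst u h1 h2.2
      exact Tendsto.congr' hev.symm tendsto_const_nhds
    · push_neg at hst
      obtain ⟨l, hl⟩ := hξ.2 s hs
      refine ⟨l, Tendsto.congr' ?_ hl⟩
      have hgt : ∀ᶠ u in 𝓝[Ico 0 s] s, t < u :=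
        (eventually_gt_nhds hst).filter_mono nhdsWithin_le_nhds
      filter_upwards [hgt] with u h1
      exact (if_neg (not_lt.2 h1.le)).symm


lemma two_pow_tendsto {t : ℝ} : Tendsto (fun n : ℕ => t / 2 ^ n) atTop (𝓝 0) := by
  have h1 : Tendsto (fun n : ℕ => ((1:ℝ)/2) ^ n) atTop (𝓝 0) :=
    tendsto_pow_atTop_nhds_zero_of_lt_one (by norm_num) (by norm_num)
  have := h1.const_mul t
  simp only [mul_zero] at this
  convert this using 2 with n
  rw [div_eq_mul_inv, one_div, inv_pow]

lemma disc_skTendsto {N : ℕ} {ξ : ℝ → Fin N → ℝ} (hξ : IsCadlag ξ) {t : ℝ} (ht : 0 < t) :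
    SkTendsto (fun n s => if s < t then trunc (n:ℝ) (ξ (flo (t/2^n) s)) else ξ s) ξ := by
  classical
  have hh : ∀ n : ℕ, (0:ℝ) < t / 2 ^ n := fun n => by positivity
  obtain ⟨C, hC0, hC⟩ := exists_cadlag_bound hξ ht
  -- partitions: for each accuracy level k a 1/(k+1)-oscillation partition
  have hpart : ∀ k : ℕ, ∃ p : ℕ × (ℕ → ℝ), 0 < p.1 ∧ (∀ i < p.1, p.2 i < p.2 (i+1)) ∧
      p.2 0 = 0 ∧ p.2 p.1 = t ∧
      (∀ i < p.1, ∀ v, p.2 i ≤ v → v < p.2 (i+1) → ‖ξ v - ξ (p.2 i)‖ ≤ 1/(k+1)) := by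
    intro k
    obtain ⟨m, τ, h1, h2, h3, h4, h5⟩ := exists_osc_partition hξ ht
      (show (0:ℝ) < 1/(k+1) by positivity)
    exact ⟨(m, τ), h1, h2, h3, h4, h5⟩
  choose P hP1 hP2 hP3 hP4 hP5 using hpart
  -- minimal gap of each partition
  have hgap : ∀ k : ℕ, ∃ d > 0, ∀ i < (P k).1, d ≤ (P k).2 (i+1) - (P k).2 i := by
    intro k
    set F := (Finset.range ((P k).1)).image (fun i => (P k).2 (i+1) - (P k).2 i) with hF
    have hFne : F.Nonempty :=
      ⟨(P k).2 1 - (P k).2 0, Finset.mem_image.2 ⟨0, Finset.mem_range.2 (hP1 k), rfl⟩⟩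
    refine ⟨F.min' hFne, ?_, ?_⟩
    · obtain ⟨i, hi, hieq⟩ := Finset.mem_image.1 (F.min'_mem hFne)
      rw [← hieq]
      have := hP2 k i (Finset.mem_range.1 hi)
      linarith
    · intro i hi
      exact F.min'_le _ (Finset.mem_image.2 ⟨i, Finset.mem_range.2 hi, rfl⟩)
  choose δ hδpos hδ using hgap
  set K : ℕ → ℕ := fun n => Nat.findGreatest (fun k => t / 2 ^ n < δ k) n with hKdef
  set γf : ℕ → ℕ → ℝ := fun n i => ce (t / 2 ^ n) ((P (K n)).2 i) with hγf
  set g : ℕ → ℝ → ℝ :=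
    fun n => if t / 2 ^ n < δ (K n) then pwl ((P (K n)).1) ((P (K n)).2) (γf n) t else id
    with hgdef
  -- properties of γ in the good case
  have hprops : ∀ n : ℕ, t / 2 ^ n < δ (K n) →
      γf n 0 = 0 ∧ γf n ((P (K n)).1) = t ∧
      (∀ i < (P (K n)).1, γf n i < γf n (i+1)) ∧
      (∀ i ≤ (P (K n)).1, 0 ≤ γf n i - (P (K n)).2 i ∧ γf n i - (P (K n)).2 i < t / 2 ^ n) := by
    intro n hgood
    refine ⟨?_, ?_, ?_, ?_⟩
    · show ce (t / 2 ^ n) ((P (K n)).2 0) = 0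
      rw [hP3]; exact ce_zero (hh n)
    · show ce (t / 2 ^ n) ((P (K n)).2 (P (K n)).1) = t
      rw [hP4]
      refine ce_eq_self (hh n) (2 ^ n) ?_
      push_cast
      rw [div_mul_cancel₀]
      positivity
    · intro i hi
      have h1 : γf n i < (P (K n)).2 i + t / 2 ^ n := ce_lt (hh n)
      have h2 : (P (K n)).2 (i+1) ≤ γf n (i+1) := le_ce (hh n)
      have h3 := hδ (K n) i hi
      linarith
    · intro i hi
      exact ⟨by linarith [le_ce (hh := hh n) (u := (P (K n)).2 i)],
        by linarith [ce_lt (hh := hh n) (u := (P (K n)).2 i)]⟩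
  refine ⟨g, ?_, ?_, ?_⟩
  · -- homeomorphism conditions
    intro n
    by_cases hgood : t / 2 ^ n < δ (K n)
    · obtain ⟨hγ0, hγm, hγs, hγd⟩ := hprops n hgood
      have hbr : g n = pwl ((P (K n)).1) ((P (K n)).2) (γf n) t := if_pos hgood
      rw [hbr]
      refine ⟨pwl_continuous.continuousOn,
        pwl_strictMonoOn (hP2 (K n)) (hP3 (K n)) (hP4 (K n)) hγs hγ0 hγm ht, ?_⟩
      apply Set.eq_of_subset_of_subset
      · rintro y ⟨x, hx, rfl⟩
        have h0 : pwl ((P (K n)).1) ((P (K n)).2) (γf n) t 0 = 0 :=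
          pwl_of_nonpos (hP2 (K n)) (hP3 (K n)) (hP4 (K n)) le_rfl
        have := pwl_mono (hP2 (K n)) (hP3 (K n)) (hP4 (K n)) hγs (mem_Ici.1 hx)
        rw [h0] at this
        exact this
      · intro y hy
        rcases le_or_gt t y with hty | hty
        · exact ⟨y, le_trans ht.le hty, pwl_of_ge (hP2 (K n)) (hP3 (K n)) (hP4 (K n)) hγ0 hγm hty⟩
        · have hcont : ContinuousOn (pwl ((P (K n)).1) ((P (K n)).2) (γf n) t) (Icc 0 t) :=
            pwl_continuous.continuousOn
          have hIVT := intermediate_value_Icc ht.le hcont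
          have h0 : pwl ((P (K n)).1) ((P (K n)).2) (γf n) t 0 = 0 :=
            pwl_of_nonpos (hP2 (K n)) (hP3 (K n)) (hP4 (K n)) le_rfl
          have h1 : pwl ((P (K n)).1) ((P (K n)).2) (γf n) t t = t :=
            pwl_of_ge (hP2 (K n)) (hP3 (K n)) (hP4 (K n)) hγ0 hγm le_rfl
          rw [h0, h1] at hIVT
          obtain ⟨x, hx, hxy⟩ := hIVT ⟨mem_Ici.1 hy, hty.le⟩
          exact ⟨x, hx.1, hxy⟩
    · have hbr : g n = id := if_neg hgood
      rw [hbr]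
      exact ⟨continuousOn_id, fun x _ y _ hxy => hxy, image_id _⟩
  · -- uniform convergence of g to id
    rw [Metric.tendstoUniformlyOn_iff]
    intro ε hε
    filter_upwards [two_pow_tendsto.eventually (gt_mem_nhds hε)] with n hn s hs
    by_cases hgood : t / 2 ^ n < δ (K n)
    · obtain ⟨hγ0, hγm, hγs, hγd⟩ := hprops n hgood
      have hbr : g n s = pwl ((P (K n)).1) ((P (K n)).2) (γf n) t s := by
        rw [hgdef]; simp only [if_pos hgood]
      obtain ⟨hb1, hb2⟩ := pwl_sub_bounds (hP2 (K n)) (hP3 (K n)) (hP4 (K n)) hγs hγ0 hγm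
        ht (hh n) hγd (s := s)
      have h9 : pwl ((P (K n)).1) ((P (K n)).2) (γf n) t s - s < ε := lt_trans hb2 hn
      rw [Real.dist_eq, hbr, id_eq]
      rw [abs_of_nonpos (by linarith)]
      linarith
    · have hbr : g n s = s := by rw [hgdef]; simp only [if_neg hgood, id_eq]
      rw [hbr, Real.dist_eq, id_eq, sub_self, abs_zero]
      exact hε
  · -- uniform convergence of the discretizations
    intro T hT
    rw [Metric.tendstoUniformlyOn_iff]
    intro ε hε
    set k := max 1 ⌈2/ε⌉₊ with hk
    have hk1 : 1 ≤ k := le_max_left _ _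
    have hkε : 2 / ((k:ℝ) + 1) < ε := by
      have h1 : (2:ℝ)/ε ≤ ⌈2/ε⌉₊ := Nat.le_ceil _
      have h2 : ((⌈2/ε⌉₊ : ℕ) : ℝ) ≤ (k:ℝ) := by exact_mod_cast Nat.le_max_right 1 _
      have h3 : (2:ℝ)/ε < (k:ℝ) + 1 := lt_of_le_of_lt (le_trans h1 h2) (lt_add_one _)
      rw [div_lt_iff₀ (by positivity)]
      calc (2:ℝ) = ε * (2/ε) := by field_simp
        _ < ε * ((k:ℝ)+1) := by apply mul_lt_mul_of_pos_left h3 hε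
    have hE1 : ∀ᶠ n : ℕ in atTop, t / 2 ^ n < δ k :=
      two_pow_tendsto.eventually (gt_mem_nhds (hδpos k))
    filter_upwards [hE1, eventually_ge_atTop k, eventually_ge_atTop ⌈C⌉₊] with n h1 h2 h3
    have hKk : k ≤ K n := by
      rw [hKdef]; exact Nat.le_findGreatest h2 h1
    have hgood : t / 2 ^ n < δ (K n) := by
      have := Nat.findGreatest_spec (P := fun k => t / 2 ^ n < δ k) h2 h1
      rw [hKdef]; exact this
    obtain ⟨hγ0, hγm, hγs, hγd⟩ := hprops n hgood
    have hbr : ∀ s, g n s = pwl ((P (K n)).1) ((P (K n)).2) (γf n) t s := by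
      intro s; rw [hgdef]; simp only [if_pos hgood]
    have hCn : C ≤ (n:ℝ) := Nat.ceil_le.1 h3
    intro s hs
    rcases lt_or_ge s t with hst | hst
    · -- main estimate
      obtain ⟨j, hjm, hj1, hj2⟩ := locate (hP2 (K n)) (hP3 (K n)) hs.1 (by rw [hP4]; exact hst)
      have hτmono := mono_of_lt_succ (hP2 (K n))
      have hγmono := mono_of_lt_succ hγs
      have hΔ : 0 < (P (K n)).2 (j+1) - (P (K n)).2 j := by linarith [hP2 (K n) j hjm]
      have hcj : 0 < (γf n (j+1) - γf n j)/((P (K n)).2 (j+1) - (P (K n)).2 j) :=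
        div_pos (by linarith [hγs j hjm]) hΔ
      have hgs : g n s = γf n j + (γf n (j+1) - γf n j)/((P (K n)).2 (j+1) - (P (K n)).2 j) * (s - (P (K n)).2 j) := by
        rw [hbr s, pwl_formula (hP2 (K n)) (hP3 (K n)) (hP4 (K n)) hjm hj1 hj2.le, hγ0]
        ring
      have hgs1 : γf n j ≤ g n s := by
        rw [hgs]
        have : 0 ≤ (γf n (j+1) - γf n j)/((P (K n)).2 (j+1) - (P (K n)).2 j) * (s - (P (K n)).2 j) :=
          mul_nonneg hcj.le (by linarith)
        linarith
      have hgs2 : g n s < γf n (j+1) := by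
        rw [hgs]
        have h4 : (γf n (j+1) - γf n j)/((P (K n)).2 (j+1) - (P (K n)).2 j) * (s - (P (K n)).2 j)
            < (γf n (j+1) - γf n j)/((P (K n)).2 (j+1) - (P (K n)).2 j) * ((P (K n)).2 (j+1) - (P (K n)).2 j) :=
          mul_lt_mul_of_pos_left (by linarith) hcj
        have h5 : (γf n (j+1) - γf n j)/((P (K n)).2 (j+1) - (P (K n)).2 j) * ((P (K n)).2 (j+1) - (P (K n)).2 j)
            = γf n (j+1) - γf n j := by field_simp
        linarith
      have hgst : g n s < t := by
        have : γf n (j+1) ≤ γf n (P (K n)).1 := hγmono (j+1) (P (K n)).1 (by omega) le_rfl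
        rw [hγm] at this
        linarith
      set u := flo (t / 2 ^ n) (g n s) with hu
      have hγce : γf n j = (t / 2 ^ n) * ⌈(P (K n)).2 j / (t / 2 ^ n)⌉ := by
        rw [hγf]; rfl
      have hu1 : γf n j ≤ u := by
        rw [hγce] at hgs1 ⊢
        exact grid_le_flo (hh n) _ hgs1
      have hu2 : u < (P (K n)).2 (j+1) := by
        apply lt_of_flo_lt_ce (hh n)
        calc flo (t / 2 ^ n) (g n s) ≤ g n s := flo_le (hh n)
          _ < γf n (j+1) := hgs2
      have hu3 : (P (K n)).2 j ≤ u := le_trans (le_ce (hh n)) hu1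
      have hu0 : 0 ≤ u := by
        have : 0 ≤ (P (K n)).2 j := by
          rw [← hP3 (K n)]; exact hτmono 0 j (Nat.zero_le _) (by omega)
        linarith
      have hut : u ≤ t := by
        have : (P (K n)).2 (j+1) ≤ (P (K n)).2 (P (K n)).1 := hτmono (j+1) (P (K n)).1 (by omega) le_rfl
        rw [hP4] at this
        linarith
      have hval : (if (g n s) < t then trunc (n:ℝ) (ξ (flo (t/2^n) (g n s))) else ξ (g n s))
          = ξ u := by
        rw [if_pos hgst, ← hu]
        exact trunc_eq_self (le_trans (hC u hu0 hut) hCn)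
      show dist (ξ s)
        (if (g n s) < t then trunc (n:ℝ) (ξ (flo (t/2^n) (g n s))) else ξ (g n s)) < ε
      rw [hval]
      have hosc1 := hP5 (K n) j hjm s hj1 hj2
      have hosc2 := hP5 (K n) j hjm u hu3 hu2
      have hklek : 1/((K n : ℝ)+1) ≤ 1/((k:ℝ)+1) := by
        apply one_div_le_one_div_of_le (by positivity)
        have : (k:ℝ) ≤ K n := by exact_mod_cast hKk
        linarith
      have : dist (ξ s) (ξ u) ≤ 2/((k:ℝ)+1) := by
        rw [dist_eq_norm]
        calc ‖ξ s - ξ u‖ ≤ ‖ξ s - ξ ((P (K n)).2 j)‖ + ‖ξ ((P (K n)).2 j) - ξ u‖ := by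
              have e : ξ s - ξ u = (ξ s - ξ ((P (K n)).2 j)) + (ξ ((P (K n)).2 j) - ξ u) := by abel
              rw [e]; exact norm_add_le _ _
          _ ≤ 1/((K n : ℝ)+1) + 1/((K n : ℝ)+1) := by
              refine add_le_add hosc1 ?_
              rw [norm_sub_rev]; exact hosc2
          _ = 2/((K n : ℝ)+1) := by ring
          _ ≤ 2/((k:ℝ)+1) := by
              apply div_le_div_of_nonneg_left (by norm_num) (by positivity)
              have hc : (k:ℝ) ≤ K n := by exact_mod_cast hKk
              exact add_le_add_left hc 1
      exact lt_of_le_of_lt this hkε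
    · -- s ≥ t : exact equality
      have hgns : g n s = s := by
        rw [hbr s]
        exact pwl_of_ge (hP2 (K n)) (hP3 (K n)) (hP4 (K n)) hγ0 hγm hst
      show dist (ξ s)
        (if (g n s) < t then trunc (n:ℝ) (ξ (flo (t/2^n) (g n s))) else ξ (g n s)) < ε
      rw [hgns, if_neg (not_lt.2 hst), dist_self]
      exact hε

end S4
section ControlLemmas
open MeasureTheory

namespace S4

lemma measurable_evalR {N : ℕ} {v : ℝ} (hv : 0 ≤ v) :
    Measurable fun ξ : PathR N => ξ.1 v := by
  intro B hB
  exact MeasurableSpace.measurableSet_generateFrom ⟨v, hv, B, hB, rfl⟩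

lemma isCadlag_stop {E : Type*} [TopologicalSpace E] {ω : ℝ → E} (hω : IsCadlag ω)
    {θ : ℝ} (hθ : 0 ≤ θ) : IsCadlag fun u => ω (min u θ) := by
  constructor
  · intro u hu
    rcases lt_or_ge u θ with h | h
    · refine (hω.1 u hu).congr_of_eventuallyEq ?_ (by rw [min_eq_left h.le])
      filter_upwards [Ico_mem_nhdsGE_of_mem (Set.mem_Ico.2 ⟨le_rfl, h⟩)] with v hv
      rw [min_eq_left hv.2.le]
    · show Filter.Tendsto (fun v => ω (min v θ)) (𝓝[Set.Ici u] u) (𝓝 (ω (min u θ)))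
      have hfu : min u θ = θ := min_eq_right h
      rw [hfu]
      refine Filter.Tendsto.congr' ?_ tendsto_const_nhds
      filter_upwards [self_mem_nhdsWithin] with v hv
      rw [min_eq_right (le_trans h hv)]
  · intro u hu
    rcases le_or_gt u θ with h | h
    · obtain ⟨l, hl⟩ := hω.2 u hu
      refine ⟨l, Filter.Tendsto.congr' ?_ hl⟩
      filter_upwards [self_mem_nhdsWithin] with v hv
      rw [min_eq_left (le_trans hv.2.le h)]
    · refine ⟨ω θ, Filter.Tendsto.congr' ?_ tendsto_const_nhds⟩
      have hgt : ∀ᶠ v in 𝓝[Set.Ico 0 u] u, θ < v :=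
        (eventually_gt_nhds h).filter_mono nhdsWithin_le_nhds
      filter_upwards [hgt] with v hv
      rw [min_eq_right hv.le]

/-- The path stopped at time `θ`. -/
def stopD {M : ℕ} (θ : ℝ) (hθ : 0 ≤ θ) (ω : PathD M) : PathD M :=
  ⟨fun u => ω.1 (min u θ), isCadlag_stop ω.2 hθ⟩

lemma measurable_stopD {M : ℕ} (θ : ℝ) (hθ : 0 ≤ θ) :
    Measurable[Ft M θ] (stopD θ hθ : PathD M → PathD M) := by
  refine @measurable_generateFrom (PathD M) (PathD M) (Ft M θ) _ (stopD θ hθ) ?_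
  rintro S ⟨u, hu, j, rfl⟩
  show MeasurableSet[Ft M θ] {ω : PathD M | ω.1 (min u θ) = j}
  exact MeasurableSpace.measurableSet_generateFrom
    ⟨min u θ, le_min hu hθ, min_le_right _ _, j, rfl⟩

lemma eval_stop {M N : ℕ} {P : (Fin M → ℝ) → Measure (PathD M)} {Ξ : PathD M → PathR N}
    (hΞ : IsControl P Ξ) {θ : ℝ} (hθ : 0 ≤ θ) (ω : PathD M) :
    (Ξ (stopD θ hθ ω)).1 θ = (Ξ ω).1 θ := by
  have hrc := ω.2.1 θ hθ
  have hev : ∀ᶠ u in 𝓝[Set.Ici θ] θ, ω.1 u = ω.1 θ := by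
    have hmem : {ω.1 θ} ∈ 𝓝 (ω.1 θ) := (isOpen_discrete _).mem_nhds rfl
    filter_upwards [hrc hmem] with u hu using hu
  obtain ⟨ε, hε, hball⟩ := nhdsWithin_event hev
  have hagree : ∀ u ∈ Set.Icc 0 (θ + ε/2), (stopD θ hθ ω).1 u = ω.1 u := by
    intro u hu
    rcases le_or_gt u θ with h | h
    · show ω.1 (min u θ) = ω.1 u
      rw [min_eq_left h]
    · show ω.1 (min u θ) = ω.1 u
      rw [min_eq_right h.le]
      have h1 : ω.1 u = ω.1 θ := hball u h.le
        (by rw [Real.dist_eq, abs_of_nonneg (by linarith)]; linarith [hu.2])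
      rw [h1]
  exact hΞ.2.2 (θ + ε/2) (by linarith) _ ω hagree θ ⟨hθ, by linarith⟩

end S4
end ControlLemmas

end Aux

/-- Any control can be approximated, pointwise in the Skorohod sense and
locally uniformly boundedly, by controls piecewise constant in `[0,t]`. -/
theorem stmt4 {M N : ℕ} (Λ : Matrix (Fin M) (Fin M) ℝ) (hΛ : CouplingOK Λ)
    (P : (Fin M → ℝ) → MeasureTheory.Measure (PathD M)) (hP : PFamily Λ P)
    (Ξ : PathD M → PathR N) (hΞ : IsControl P Ξ) (t : ℝ) (ht : 0 < t) :
    ∃ Ξn : ℕ → PathD M → PathR N,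
      (∀ n, IsControl P (Ξn n) ∧ PiecewiseConstControl (Ξn n) t) ∧
      (∀ T : ℝ, 0 < T → ∃ R : ℝ, 0 < R ∧
        ∀ n, ASurely P fun ω => ∀ s ∈ Set.Icc (0 : ℝ) T, ‖(Ξn n ω).1 s‖ < R) ∧
      (∀ ω : PathD M, SkTendsto (fun n => (Ξn n ω).1) ((Ξ ω).1)) := by
  classical
  have hh : ∀ n : ℕ, (0:ℝ) < t / 2 ^ n := fun n => by positivity
  refine ⟨fun n ω =>
    ⟨fun s => if s < t then S4.trunc (n:ℝ) ((Ξ ω).1 (S4.flo (t/2^n) s)) else (Ξ ω).1 s,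
      S4.isCadlag_disc (Ξ ω).2 (hh n)⟩, fun n => ⟨⟨?_, ?_, ?_⟩, ?_⟩, ?_, ?_⟩
  · -- measurability
    refine @measurable_generateFrom (PathD M) (PathR N) _ _ _ ?_
    rintro S ⟨v, hv, B, hB, rfl⟩
    show MeasurableSet {ω : PathD M |
      (if v < t then S4.trunc (n:ℝ) ((Ξ ω).1 (S4.flo (t/2^n) v)) else (Ξ ω).1 v) ∈ B}
    by_cases hvt : v < t
    · simp only [if_pos hvt]
      have hm : Measurable fun ω : PathD M => S4.trunc (n:ℝ) ((Ξ ω).1 (S4.flo (t/2^n) v)) :=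
        S4.measurable_trunc.comp ((S4.measurable_evalR (S4.flo_nonneg (hh n) hv)).comp hΞ.1)
      exact hm hB
    · simp only [if_neg hvt]
      exact ((S4.measurable_evalR hv).comp hΞ.1) hB
  · -- local boundedness
    intro t' ht'
    obtain ⟨R, hR, hAS⟩ := hΞ.2.1 (max t' t) (lt_of_lt_of_le ht' (le_max_left _ _))
    refine ⟨R, hR, fun a ha hpos => ?_⟩
    filter_upwards [hAS a ha hpos] with ω hω
    intro s hs
    show ‖if s < t then S4.trunc (n:ℝ) ((Ξ ω).1 (S4.flo (t/2^n) s)) else (Ξ ω).1 s‖ < R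
    by_cases hst : s < t
    · rw [if_pos hst]
      refine lt_of_le_of_lt S4.norm_trunc_le (hω _ ⟨S4.flo_nonneg (hh n) hs.1, ?_⟩)
      exact le_trans (S4.flo_le (hh n)) (le_trans hs.2 (le_max_left _ _))
    · rw [if_neg hst]
      exact hω s ⟨hs.1, le_trans hs.2 (le_max_left _ _)⟩
  · -- nonanticipation
    intro t' ht' ω₁ ω₂ hag s hs
    show (if s < t then S4.trunc (n:ℝ) ((Ξ ω₁).1 (S4.flo (t/2^n) s)) else (Ξ ω₁).1 s)
      = (if s < t then S4.trunc (n:ℝ) ((Ξ ω₂).1 (S4.flo (t/2^n) s)) else (Ξ ω₂).1 s)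
    by_cases hst : s < t
    · rw [if_pos hst, if_pos hst,
        hΞ.2.2 t' ht' ω₁ ω₂ hag (S4.flo (t/2^n) s)
          ⟨S4.flo_nonneg (hh n) hs.1, le_trans (S4.flo_le (hh n)) hs.2⟩]
    · rw [if_neg hst, if_neg hst, hΞ.2.2 t' ht' ω₁ ω₂ hag s hs]
  · -- piecewise constant structure
    refine ⟨2^n, fun k => (k.1 : ℝ) * (t/2^n), ?_, by simp, ?_,
      fun k ω => S4.trunc (n:ℝ) ((Ξ ω).1 ((k.1:ℝ) * (t/2^n))),
      fun k => ⟨?_, (n:ℝ), fun ω => S4.norm_trunc_le' (by positivity)⟩, ?_⟩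
    · intro k l hkl
      have hc : (k.1:ℝ) < (l.1:ℝ) := by exact_mod_cast hkl
      exact mul_lt_mul_of_pos_right hc (hh n)
    · show ((Fin.last (2^n)).1 : ℝ) * (t/2^n) = t
      rw [Fin.val_last]
      field_simp
      norm_num
    · -- measurability of X k w.r.t. F_{s_k}
      have hθ0 : (0:ℝ) ≤ ((k.castSucc.1 : ℕ):ℝ) * (t/2^n) := by positivity
      have hfun : (fun ω => S4.trunc (n:ℝ) ((Ξ ω).1 ((k.1:ℝ) * (t/2^n))))
          = (S4.trunc (n:ℝ)) ∘ (fun ξ : PathR N => ξ.1 (((k.castSucc.1 : ℕ):ℝ) * (t/2^n)))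
            ∘ Ξ ∘ (S4.stopD _ hθ0) := by
        funext ω
        simp only [Function.comp_apply, Fin.coe_castSucc]
        rw [S4.eval_stop hΞ (by positivity) ω]
      show Measurable[Ft M (((k.castSucc.1 : ℕ):ℝ) * (t/2^n))]
        (fun ω => S4.trunc (n:ℝ) ((Ξ ω).1 ((k.1:ℝ) * (t/2^n))))
      rw [hfun]
      exact S4.measurable_trunc.comp ((S4.measurable_evalR hθ0).comp
        (hΞ.1.comp (S4.measurable_stopD _ hθ0)))
    · -- values on the grid intervals
      intro ω k r hr
      obtain ⟨hr1, hr2⟩ := hr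
      simp only [Fin.coe_castSucc, Fin.val_succ] at hr1 hr2
      have hr2' : r < ((k.1:ℝ) + 1) * (t/2^n) := by
        push_cast at hr2
        linarith
      have hrt : r < t := by
        have hk1 : (k.1:ℝ) + 1 ≤ (2^n:ℝ) := by exact_mod_cast k.isLt
        have h2 : ((k.1:ℝ) + 1) * (t/2^n) ≤ (2^n:ℝ) * (t/2^n) :=
          mul_le_mul_of_nonneg_right hk1 (hh n).le
        have h3 : ((2:ℝ)^n) * (t/2^n) = t := by field_simp
        linarith
      have hflo : S4.flo (t/2^n) r = (t/2^n) * ((k.1:ℤ):ℝ) := by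
        apply S4.flo_eq (hh n)
        · push_cast
          linarith [hr1]
        · push_cast
          linarith [hr2']
      show (if r < t then S4.trunc (n:ℝ) ((Ξ ω).1 (S4.flo (t/2^n) r)) else (Ξ ω).1 r)
        = S4.trunc (n:ℝ) ((Ξ ω).1 ((k.1:ℝ) * (t/2^n)))
      rw [if_pos hrt, hflo]
      push_cast
      rw [mul_comm]
  · -- uniform local boundedness
    intro T hT
    obtain ⟨R, hR, hAS⟩ := hΞ.2.1 (max T t) (lt_of_lt_of_le hT (le_max_left _ _))
    refine ⟨R, hR, fun n a ha hpos => ?_⟩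
    filter_upwards [hAS a ha hpos] with ω hω
    intro s hs
    show ‖if s < t then S4.trunc (n:ℝ) ((Ξ ω).1 (S4.flo (t/2^n) s)) else (Ξ ω).1 s‖ < R
    by_cases hst : s < t
    · rw [if_pos hst]
      refine lt_of_le_of_lt S4.norm_trunc_le (hω _ ⟨S4.flo_nonneg (hh n) hs.1, ?_⟩)
      exact le_trans (S4.flo_le (hh n)) (le_trans hs.2 (le_max_left _ _))
    · rw [if_neg hst]
      exact hω s ⟨hs.1, le_trans hs.2 (le_max_left _ _)⟩
  · -- Skorohod convergence
    exact fun ω => S4.disc_skTendsto (Ξ ω).2 ht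
end
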